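/- No square-complementary graph has a cut vertex. -/

import Mathlib

open SimpleGraph

/-- The square of a graph: two distinct vertices are adjacent iff they are at
distance at most 2 in `G`, i.e. adjacent or having a common neighbor. -/
def SimpleGraph.square {V : Type*} (G : SimpleGraph V) : SimpleGraph V where
  Adj u v := u ≠ v ∧ (G.Adj u v ∨ ∃ w, G.Adj u w ∧ G.Adj w v)
  symm := by
    refine ⟨?_⟩
    rintro u v ⟨h, h' | ⟨w, hw1, hw2⟩⟩
    · exact ⟨h.symm, Or.inl h'.symm⟩
    · exact ⟨h.symm, Or.inr ⟨w, hw2.symm, hw1.symm⟩⟩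
  loopless := ⟨by rintro v ⟨h, -⟩; exact h rfl⟩

/-- A graph is square-complementary (squco) if its square is isomorphic to its
complement. -/
def SimpleGraph.IsSquco {V : Type*} (G : SimpleGraph V) : Prop :=
  Nonempty (G.square ≃g Gᶜ)

/-- `v` is a cut vertex of `G`: removing `v` disconnects two vertices that were
connected in `G`, i.e. removal increases the number of connected components. -/
def SimpleGraph.IsCutVertex {V : Type*} (G : SimpleGraph V) (v : V) : Prop :=
  ∃ u w : {x : V // x ≠ v}, G.Reachable u.1 w.1 ∧
    ¬ (G.induce {x : V | x ≠ v}).Reachable ⟨u.1, u.2⟩ ⟨w.1, w.2⟩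

namespace SqcoAux

variable {V : Type*}

/-- `x` and `y` are "far": distinct, non-adjacent, with no common neighbor
(i.e. at distance at least 3, possibly infinite). -/
def Far (G : SimpleGraph V) (x y : V) : Prop :=
  x ≠ y ∧ ¬ G.Adj x y ∧ ∀ z, ¬ (G.Adj x z ∧ G.Adj z y)

theorem Far.symm {G : SimpleGraph V} {x y : V} (h : Far G x y) : Far G y x :=
  ⟨h.1.symm, fun ha => h.2.1 ha.symm, fun z hz => h.2.2 z ⟨hz.2.symm, hz.1.symm⟩⟩

theorem far_iff_sq {G : SimpleGraph V} {x y : V} :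
    Far G x y ↔ (x ≠ y ∧ ¬ G.square.Adj x y) := by
  constructor
  · rintro ⟨h1, h2, h3⟩
    exact ⟨h1, fun ⟨_, h⟩ => h.elim h2 (fun ⟨z, hz⟩ => h3 z hz)⟩
  · rintro ⟨h1, h⟩
    exact ⟨h1, fun ha => h ⟨h1, Or.inl ha⟩, fun z hz => h ⟨h1, Or.inr ⟨z, hz.1, hz.2⟩⟩⟩

theorem adj_phi {G : SimpleGraph V} (φ : G.square ≃g Gᶜ) (x y : V) :
    G.Adj (φ x) (φ y) ↔ Far G x y := by
  have hmap : Gᶜ.Adj (φ x) (φ y) ↔ G.square.Adj x y := φ.map_adj_iff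
  by_cases hxy : x = y
  · subst hxy
    simp [Far]
  · constructor
    · intro h
      exact far_iff_sq.mpr ⟨hxy, fun hs => ((G.compl_adj _ _).mp (hmap.mpr hs)).2 h⟩
    · intro hf
      have hs := (far_iff_sq.mp hf).2
      by_contra hna
      exact hs (hmap.mp ((G.compl_adj _ _).mpr ⟨fun he => hxy (φ.injective he), hna⟩))

theorem exists_far {G : SimpleGraph V} (φ : G.square ≃g Gᶜ)
    (hV : ∃ p q : V, p ≠ q) (x : V) : ∃ y, Far G x y := by
  have L1 : ∀ x : V, (∀ y, x ≠ y → G.square.Adj x y) → ∀ z, ¬ G.Adj (φ x) z := by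
    intro x hx z hz
    have hzz : z = φ (φ.symm z) := (φ.apply_symm_apply z).symm
    by_cases hxy : x = φ.symm z
    · rw [hzz, ← hxy] at hz
      exact G.irrefl hz
    · have hc : Gᶜ.Adj (φ x) (φ (φ.symm z)) := φ.map_adj_iff.mpr (hx _ hxy)
      rw [← hzz] at hc
      exact ((G.compl_adj _ _).mp hc).2 hz
  have L2 : ∀ x : V, (∀ z, ¬ G.Adj x z) → ∀ z, z ≠ φ x → G.Adj (φ x) z := by
    intro x hx z hz
    have hy : z = φ (φ.symm z) := (φ.apply_symm_apply z).symm
    have hyx : x ≠ φ.symm z := fun he => hz (by rw [hy, ← he])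
    have hf : Far G x (φ.symm z) :=
      ⟨hyx, fun h => hx _ h, fun w hw => hx w hw.1⟩
    rw [hy]
    exact (adj_phi φ x _).mpr hf
  by_contra hno
  have hx : ∀ y, x ≠ y → G.square.Adj x y := by
    intro y hne
    by_contra hs
    exact hno ⟨y, far_iff_sq.mpr ⟨hne, hs⟩⟩
  have iso1 : ∀ z, ¬ G.Adj (φ x) z := L1 x hx
  have univ1 : ∀ z, z ≠ φ (φ x) → G.Adj (φ (φ x)) z := L2 (φ x) iso1
  have hx2 : ∀ y, φ (φ x) ≠ y → G.square.Adj (φ (φ x)) y :=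
    fun y hne => ⟨hne, Or.inl (univ1 y (Ne.symm hne))⟩
  have iso2 : ∀ z, ¬ G.Adj (φ (φ (φ x))) z := L1 _ hx2
  by_cases he : φ (φ (φ x)) = φ (φ x)
  · obtain ⟨p, q, hpq⟩ := hV
    by_cases hp : p = φ (φ x)
    · have hq : q ≠ φ (φ x) := fun h => hpq (hp.trans h.symm)
      exact (he ▸ iso2) q (univ1 q hq)
    · exact (he ▸ iso2) p (univ1 p hp)
  · exact iso2 _ (univ1 _ he).symm

theorem exists_ffar {G : SimpleGraph V} (φ : G.square ≃g Gᶜ)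
    (hV : ∃ p q : V, p ≠ q) (x : V) :
    ∃ y, x ≠ y ∧ ¬ Far G x y ∧ ∀ z, ¬ (Far G x z ∧ Far G z y) := by
  obtain ⟨y', hy'⟩ := exists_far φ hV (φ x)
  have hyy : φ (φ.symm y') = y' := φ.apply_symm_apply y'
  refine ⟨φ.symm y', ?_, ?_, ?_⟩
  · intro he
    exact hy'.1 (by rw [← hyy, ← he])
  · intro hf
    have hadj := (adj_phi φ x (φ.symm y')).mpr hf
    rw [hyy] at hadj
    exact hy'.2.1 hadj
  · rintro z ⟨h1, h2⟩
    have ha1 := (adj_phi φ x z).mpr h1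
    have ha2 := (adj_phi φ z (φ.symm y')).mpr h2
    rw [hyy] at ha2
    exact hy'.2.2 (φ z) ⟨ha1, ha2⟩

theorem case1 {G : SimpleGraph V} (SA SB : V → Prop) (v : V)
    (hFar : ∀ a b, SA a → SB b → ¬ (G.Adj v a ∧ G.Adj v b) → Far G a b)
    (hcover : ∀ x, x ≠ v → SA x ∨ SB x)
    (a₁ : V) (ha₁ : SA a₁) (ha₁' : ¬ G.Adj v a₁)
    (b₁ : V) (hb₁ : SB b₁) (hb₁' : ¬ G.Adj v b₁)
    (y₀ : V) (hy₀ : SB y₀) (hy₀' : Far G v y₀)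
    (hPF : ∀ x, ∃ y, x ≠ y ∧ ¬ Far G x y ∧ ∀ z, ¬ (Far G x z ∧ Far G z y)) :
    False := by
  obtain ⟨y, hneq, hnF, hnoz⟩ := hPF a₁
  have Fa₁B : ∀ b, SB b → Far G a₁ b :=
    fun b hb => hFar a₁ b ha₁ hb (fun hc => ha₁' hc.1)
  by_cases hyv : y = v
  · exact hnoz y₀ ⟨Fa₁B y₀ hy₀, hyv ▸ hy₀'.symm⟩
  · rcases hcover y hyv with hySA | hySB
    · exact hnoz b₁ ⟨Fa₁B b₁ hb₁, (hFar y b₁ hySA hb₁ (fun hc => hb₁' hc.2)).symm⟩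
    · exact hnF (Fa₁B y hySB)

theorem case2 {G : SimpleGraph V} (SA SB : V → Prop) (v : V)
    (hFar : ∀ a b, SA a → SB b → ¬ (G.Adj v a ∧ G.Adj v b) → Far G a b)
    (hcover : ∀ x, x ≠ v → SA x ∨ SB x)
    (hall : ∀ b, SB b → G.Adj v b)
    (b₀ : V) (hb₀ : SB b₀)
    (hP : ∀ x, ∃ y, Far G x y)
    (hPF : ∀ x, ∃ y, x ≠ y ∧ ¬ Far G x y ∧ ∀ z, ¬ (Far G x z ∧ Far G z y)) :
    False := by
  obtain ⟨y₀, hy₀⟩ := hP v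
  have hvy₀ : ¬ G.Adj v y₀ := hy₀.2.1
  have hy₀v : y₀ ≠ v := hy₀.1.symm
  have hy₀SA : SA y₀ := (hcover y₀ hy₀v).resolve_right (fun hb => hvy₀ (hall y₀ hb))
  obtain ⟨y, hneq, hnF, hnoz⟩ := hPF b₀
  have FarB : ∀ b', SB b' → Far G b' y₀ :=
    fun b' hb' => (hFar y₀ b' hy₀SA hb' (fun hc => hvy₀ hc.1)).symm
  by_cases hyv : y = v
  · exact hnoz y₀ ⟨FarB b₀ hb₀, hyv ▸ hy₀.symm⟩
  · rcases hcover y hyv with hySA | hySB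
    · by_cases hvy : G.Adj v y
      · have hstar : ∀ z, SA z → ¬ G.Adj v z → ¬ Far G z y :=
          fun z hz hz' hf =>
            hnoz z ⟨(hFar z b₀ hz hb₀ (fun hc => hz' hc.1)).symm, hf⟩
        obtain ⟨y', hy'⟩ := hP y
        by_cases hy'v : y' = v
        · exact hy'.2.1 (hy'v ▸ hvy.symm)
        · rcases hcover y' hy'v with h1 | h1
          · by_cases hvy'' : G.Adj v y'
            · exact hy'.2.2 v ⟨hvy.symm, hvy''⟩
            · exact hstar y' h1 hvy'' hy'.symm
          · exact hy'.2.2 v ⟨hvy.symm, hall y' h1⟩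
      · exact hnF ((hFar y b₀ hySA hb₀ (fun hc => hvy hc.1)).symm)
    · exact hnoz y₀ ⟨FarB b₀ hb₀, (FarB y hySB).symm⟩

end SqcoAux

/-- No square-complementary graph has a cut vertex. -/
theorem isSquco_no_cutVertex {V : Type*} [Fintype V] (G : SimpleGraph V)
    (h : G.IsSquco) (v : V) : ¬ G.IsCutVertex v := by
  open SqcoAux in
  rintro ⟨u, w, -, hsep⟩
  obtain ⟨φ⟩ := h
  -- u.1 ≠ w.1
  have huw : u.1 ≠ w.1 := by
    intro he
    exact hsep (by rw [show (⟨u.1, u.2⟩ : {x : V | x ≠ v}) = ⟨w.1, w.2⟩ from Subtype.ext he])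
  have hV : ∃ p q : V, p ≠ q := ⟨u.1, w.1, huw⟩
  -- the graph G with v removed (as a graph on V)
  set K : SimpleGraph V :=
    { Adj := fun x y => G.Adj x y ∧ x ≠ v ∧ y ≠ v
      symm := ⟨fun x y hxy => ⟨hxy.1.symm, hxy.2.2, hxy.2.1⟩⟩
      loopless := ⟨fun x hx => G.irrefl hx.1⟩ } with hK
  have hKadj : ∀ {x y : V}, K.Adj x y ↔ (G.Adj x y ∧ x ≠ v ∧ y ≠ v) := by
    intro x y; rw [hK]
  -- endpoints of K-walks starting off v stay off v
  have Kne : ∀ {x y : V}, K.Walk x y → x ≠ v → y ≠ v := by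
    intro x y p
    induction p with
    | nil => exact id
    | cons hadj _ ih => exact fun _ => ih (hKadj.mp hadj).2.2
  -- transfer K-reachability to reachability in the induced graph
  have htrans : ∀ {x y : V} (p : K.Walk x y) (hx : x ≠ v) (hy : y ≠ v),
      (G.induce {z : V | z ≠ v}).Reachable ⟨x, hx⟩ ⟨y, hy⟩ := by
    intro x y p
    induction p with
    | nil => exact fun _ _ => Reachable.refl _
    | @cons a b c hadj _ ih =>
      intro hx hy
      have hb : b ≠ v := (hKadj.mp hadj).2.2
      have hab : (G.induce {z : V | z ≠ v}).Adj ⟨a, hx⟩ ⟨b, hb⟩ := (hKadj.mp hadj).1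
      exact (hab.reachable).trans (ih hb hy)
  set SA : V → Prop := fun x => K.Reachable u.1 x with hSA
  set SB : V → Prop := fun x => x ≠ v ∧ ¬ K.Reachable u.1 x with hSB
  have hSAu : SA u.1 := Reachable.refl _
  have hSAne : ∀ x, SA x → x ≠ v := by
    rintro x ⟨p⟩
    exact Kne p u.2
  have hSBw : SB w.1 := by
    refine ⟨w.2, fun hr => ?_⟩
    obtain ⟨p⟩ := hr
    exact hsep (htrans p u.2 w.2)
  have hcover : ∀ x, x ≠ v → SA x ∨ SB x := by
    intro x hx
    by_cases hr : K.Reachable u.1 x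
    · exact Or.inl hr
    · exact Or.inr ⟨hx, hr⟩
  have hFar : ∀ a b, SA a → SB b → ¬ (G.Adj v a ∧ G.Adj v b) → Far G a b := by
    intro a b ha hb hvab
    have hane : a ≠ v := hSAne a ha
    have hnadj : ¬ G.Adj a b :=
      fun hadj => hb.2 (ha.trans (Adj.reachable (hKadj.mpr ⟨hadj, hane, hb.1⟩)))
    have hne : a ≠ b := fun he => hb.2 (he ▸ ha)
    refine ⟨hne, hnadj, ?_⟩
    rintro z ⟨h1, h2⟩
    by_cases hz : z = v
    · subst hz
      exact hvab ⟨h1.symm, h2⟩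
    · exact hb.2 (ha.trans ((Adj.reachable (hKadj.mpr ⟨h1, hane, hz⟩)).trans
        (Adj.reachable (hKadj.mpr ⟨h2, hz, hb.1⟩))))
  have hFar' : ∀ a b, SB a → SA b → ¬ (G.Adj v a ∧ G.Adj v b) → Far G a b :=
    fun a b ha hb hc => (hFar b a hb ha (fun hc' => hc ⟨hc'.2, hc'.1⟩)).symm
  have hcover' : ∀ x, x ≠ v → SB x ∨ SA x := fun x hx => (hcover x hx).symm
  have hP : ∀ x, ∃ y, Far G x y := exists_far φ hV
  have hPF : ∀ x, ∃ y, x ≠ y ∧ ¬ Far G x y ∧ ∀ z, ¬ (Far G x z ∧ Far G z y) :=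
    exists_ffar φ hV
  by_cases hA1 : ∃ a, SA a ∧ ¬ G.Adj v a
  · by_cases hB1 : ∃ b, SB b ∧ ¬ G.Adj v b
    · obtain ⟨a₁, ha₁, ha₁'⟩ := hA1
      obtain ⟨b₁, hb₁, hb₁'⟩ := hB1
      obtain ⟨y₀, hy₀⟩ := hP v
      have hy₀v : y₀ ≠ v := hy₀.1.symm
      rcases hcover y₀ hy₀v with hy₀SA | hy₀SB
      · exact case1 SB SA v hFar' hcover' b₁ hb₁ hb₁' a₁ ha₁ ha₁' y₀ hy₀SA hy₀ hPF
      · exact case1 SA SB v hFar hcover a₁ ha₁ ha₁' b₁ hb₁ hb₁' y₀ hy₀SB hy₀ hPF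
    · push_neg at hB1
      exact case2 SA SB v hFar hcover hB1 w.1 hSBw hP hPF
  · push_neg at hA1
    exact case2 SB SA v hFar' hcover' hA1 u.1 hSAu hP hPF
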